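/- arXiv:2308.13570 — 2 statements merged into one kernel-verified Lean document; each statement's English description precedes it below -/
import Mathlib

section
/- Let f be differentiable on [a,b] and suppose that for every ε > 0 there is a differentiable function F_ε with ‖F_ε - f‖_{L²} < ε, ‖F_ε' - f'‖_{L²} < ε, Z(F_ε' - (F_ε' - f')) = Z(F_ε'), and with extremum counts Z(F_ε') uniformly bounded by some N. If MC(F_ε) ≤ C for all ε, then MC(f) ≤ C. -/
open MeasureTheory intervalIntegral

lemma lemB (a b c d : ℝ) (hac : a ≤ c) (hcd : c < d) (hdb : d ≤ b) (g : ℝ → ℝ)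
    (hg : ContinuousOn g (Set.Icc a b)) (hgpos : ∀ x, 0 ≤ g x) {K : ℝ}
    (hK : (∫ x in a..b, g x) < K) :
    ∃ s ∈ Set.Icc c d, g s ≤ K / (d - c) := by
  have hab : a ≤ b := hac.trans (hcd.le.trans hdb)
  by_contra hcon
  push_neg at hcon
  have hgint : IntervalIntegrable g volume a b :=
    ContinuousOn.intervalIntegrable (by rwa [Set.uIcc_of_le hab])
  have hcdint : IntervalIntegrable g volume c d := hgint.mono_set
    (by rw [Set.uIcc_of_le hab, Set.uIcc_of_le hcd.le]; exact Set.Icc_subset_Icc hac hdb)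
  have hlow : K ≤ ∫ x in c..d, g x := by
    have h1 : (∫ _x in c..d, K / (d - c)) ≤ ∫ x in c..d, g x := by
      apply integral_mono_on hcd.le intervalIntegrable_const hcdint
      intro x hx; exact (hcon x hx).le
    rw [intervalIntegral.integral_const, smul_eq_mul] at h1
    have h2 : (d - c) * (K / (d - c)) = K :=
      mul_div_cancel₀ K (by linarith)
    linarith
  have hsplit : (∫ x in c..d, g x) ≤ ∫ x in a..b, g x :=
    integral_mono_interval hac hcd.le hdb
      (Filter.Eventually.of_forall fun x => hgpos x) hgint
  linarith

lemma lemA (a b : ℝ) (hab : a < b) (f f' : ℝ → ℝ)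
    (hf : ∀ x ∈ Set.Icc a b, HasDerivAt f (f' x) x)
    (hint : IntervalIntegrable f' volume a b) {δ : ℝ} (hδ : 0 < δ) :
    ∃ m : ℕ, 0 < m ∧
      (∫ x in a..b, |f' x|) - δ ≤
        ∑ i ∈ Finset.range m,
          |f (a + (i + 1) * ((b - a) / m)) - f (a + i * ((b - a) / m))| := by
  have hab' : a ≤ b := hab.le
  have hIoc : IntegrableOn f' (Set.Ioc a b) volume := by
    rw [intervalIntegrable_iff_integrableOn_Ioc_of_le hab'] at hint; exact hint
  set h : ℝ → ℝ := (Set.Ioc a b).indicator f' with hh_def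
  have hh : Integrable h volume := by
    rw [hh_def, integrable_indicator_iff measurableSet_Ioc]; exact hIoc
  obtain ⟨g, -, hg1, hgcont, hgi⟩ :=
    hh.exists_hasCompactSupport_integral_sub_le (by positivity : (0:ℝ) < δ / 4)
  have hgii : IntervalIntegrable g volume a b := hgcont.intervalIntegrable a b
  have hfg_int : IntervalIntegrable (fun x => |f' x - g x|) volume a b := (hint.sub hgii).abs
  have key1 : (∫ x in a..b, |f' x - g x|) ≤ δ / 4 := by
    rw [intervalIntegral.integral_of_le hab']
    have heq : ∀ x ∈ Set.Ioc a b, |f' x - g x| = ‖h x - g x‖ := by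
      intro x hx; rw [hh_def, Set.indicator_of_mem hx, Real.norm_eq_abs]
    rw [setIntegral_congr_fun measurableSet_Ioc heq]
    calc (∫ x in Set.Ioc a b, ‖h x - g x‖) ≤ ∫ x, ‖h x - g x‖ :=
          setIntegral_le_integral (hh.sub hgi).norm
            (Filter.Eventually.of_forall fun x => norm_nonneg _)
      _ ≤ δ / 4 := hg1
  -- uniform continuity of g on [a,b]
  set β : ℝ := δ / (4 * (b - a)) with hβ_def
  have hba : (0:ℝ) < b - a := by linarith
  have hβ : 0 < β := by rw [hβ_def]; positivity
  obtain ⟨η, hη, Hg⟩ : ∃ η > 0, ∀ x ∈ Set.Icc a b, ∀ y ∈ Set.Icc a b,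
      dist x y < η → dist (g x) (g y) < β := by
    have := (isCompact_Icc (a := a) (b := b)).uniformContinuousOn_of_continuous
      hgcont.continuousOn
    rw [Metric.uniformContinuousOn_iff] at this
    obtain ⟨η, hη, H⟩ := this β hβ
    exact ⟨η, hη, H⟩
  -- choose m
  obtain ⟨m, hm⟩ := exists_nat_gt (max 1 ((b - a) / η))
  have hm1 : (1 : ℝ) < m := lt_of_le_of_lt (le_max_left _ _) hm
  have hmpos : (0 : ℝ) < m := by linarith
  have hm0 : 0 < m := Nat.cast_pos.mp hmpos
  set w : ℝ := (b - a) / m with hw_def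
  have hw : 0 < w := div_pos (by linarith) hmpos
  have hwη : w < η := by
    rw [hw_def, div_lt_iff₀ hmpos]
    have h2 : (b - a) / η < m := lt_of_le_of_lt (le_max_right _ _) hm
    rw [div_lt_iff₀ hη] at h2
    nlinarith
  set t : ℕ → ℝ := fun i => a + i * w with ht_def
  have ht0 : t 0 = a := by simp [ht_def]
  have htm : t m = b := by
    rw [ht_def]; simp only; rw [hw_def]; field_simp; ring
  have hstep : ∀ i, t (i + 1) = t i + w := by
    intro i; simp only [ht_def]; push_cast; ring
  have htle : ∀ i, t i ≤ t (i + 1) := fun i => by rw [hstep]; linarith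
  have htmem : ∀ i ≤ m, t i ∈ Set.Icc a b := by
    intro i hi
    constructor
    · simp only [ht_def]; nlinarith [Nat.cast_nonneg (α := ℝ) i, hw.le]
    · rw [← htm]; simp only [ht_def]
      have : (i : ℝ) ≤ m := by exact_mod_cast hi
      nlinarith
  have hsubset : ∀ i < m, Set.uIcc (t i) (t (i + 1)) ⊆ Set.uIcc a b := by
    intro i hi
    rw [Set.uIcc_of_le hab', Set.uIcc_of_le (htle i)]
    exact Set.Icc_subset_Icc (htmem i hi.le).1 (htmem (i + 1) hi).2
  have hIccsub : ∀ i < m, Set.Icc (t i) (t (i + 1)) ⊆ Set.Icc a b := by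
    intro i hi
    exact Set.Icc_subset_Icc (htmem i hi.le).1 (htmem (i + 1) hi).2
  -- piece estimate 1 : ∫|g| ≤ |∫ g| + 2βw
  have hpc1 : ∀ i < m, (∫ x in t i..t (i + 1), |g x|) ≤
      |∫ x in t i..t (i + 1), g x| + 2 * β * w := by
    intro i hi
    set c := g (t i) with hc
    have hgii' : IntervalIntegrable g volume (t i) (t (i + 1)) :=
      hgcont.intervalIntegrable _ _
    have hbd : ∀ x ∈ Set.Icc (t i) (t (i + 1)), |g x - c| ≤ β := by
      intro x hx
      have hx' : x ∈ Set.Icc a b := hIccsub i hi hx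
      have hdist : dist x (t i) < η := by
        rw [Real.dist_eq, abs_of_nonneg (by linarith [hx.1])]
        have := hx.2; rw [hstep] at this; linarith
      have := Hg x hx' (t i) (htmem i hi.le) hdist
      rw [Real.dist_eq] at this; exact this.le
    have hd : t (i + 1) - t i = w := by rw [hstep]; ring
    have est1 : (∫ x in t i..t (i + 1), |g x|) ≤ (|c| + β) * w := by
      have h2 : (∫ x in t i..t (i + 1), |g x|) ≤ ∫ _x in t i..t (i + 1), (|c| + β) := by
        apply intervalIntegral.integral_mono_on (htle i) hgii'.abs
          intervalIntegrable_const
        intro x hx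
        calc |g x| ≤ |c| + |g x - c| := by
              have := abs_add_le c (g x - c); simpa [add_comm] using this
          _ ≤ |c| + β := by linarith [hbd x hx]
      rw [intervalIntegral.integral_const, hd, smul_eq_mul, mul_comm] at h2
      exact h2
    have est2 : |c| * w ≤ |∫ x in t i..t (i + 1), g x| + β * w := by
      have hsub : (∫ x in t i..t (i + 1), (g x - c)) =
          (∫ x in t i..t (i + 1), g x) - c * w := by
        rw [intervalIntegral.integral_sub hgii' intervalIntegrable_const,
          intervalIntegral.integral_const, hstep, smul_eq_mul]
        ring
      have habs : |∫ x in t i..t (i + 1), (g x - c)| ≤ β * w := by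
        calc |∫ x in t i..t (i + 1), (g x - c)| ≤ ∫ x in t i..t (i + 1), |g x - c| :=
              intervalIntegral.abs_integral_le_integral_abs (htle i)
          _ ≤ ∫ _x in t i..t (i + 1), β := by
              apply intervalIntegral.integral_mono_on (htle i)
                (hgii'.sub intervalIntegrable_const).abs intervalIntegrable_const hbd
          _ = β * w := by
              rw [intervalIntegral.integral_const, hd, smul_eq_mul]; ring
      have : |c * w| ≤ |∫ x in t i..t (i + 1), g x| + β * w := by
        have h1 : c * w = (∫ x in t i..t (i + 1), g x) -
            ∫ x in t i..t (i + 1), (g x - c) := by rw [hsub]; ring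
        rw [h1]
        calc |(∫ x in t i..t (i + 1), g x) - ∫ x in t i..t (i + 1), (g x - c)|
            ≤ |∫ x in t i..t (i + 1), g x| + |∫ x in t i..t (i + 1), (g x - c)| :=
              abs_sub _ _
          _ ≤ _ := by linarith
      rwa [abs_mul, abs_of_pos hw] at this
    calc (∫ x in t i..t (i + 1), |g x|) ≤ (|c| + β) * w := est1
      _ = |c| * w + β * w := by ring
      _ ≤ |∫ x in t i..t (i + 1), g x| + β * w + β * w := by linarith
      _ = |∫ x in t i..t (i + 1), g x| + 2 * β * w := by ring
  -- FTC pieces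
  have hftc : ∀ i < m, (∫ x in t i..t (i + 1), f' x) = f (t (i + 1)) - f (t i) := by
    intro i hi
    apply intervalIntegral.integral_eq_sub_of_hasDerivAt
    · intro x hx
      exact hf x (by rw [← Set.uIcc_of_le hab']; exact hsubset i hi hx)
    · exact hint.mono_set (hsubset i hi)
  -- piece estimate 2
  have hpc2 : ∀ i < m, |∫ x in t i..t (i + 1), g x| ≤
      |f (t (i + 1)) - f (t i)| + ∫ x in t i..t (i + 1), |f' x - g x| := by
    intro i hi
    have hgp : IntervalIntegrable g volume (t i) (t (i + 1)) := hgcont.intervalIntegrable _ _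
    have hfp : IntervalIntegrable f' volume (t i) (t (i + 1)) := hint.mono_set (hsubset i hi)
    have h1 : (∫ x in t i..t (i + 1), g x) =
        (∫ x in t i..t (i + 1), f' x) - ∫ x in t i..t (i + 1), (f' x - g x) := by
      rw [intervalIntegral.integral_sub hfp hgp]; ring
    rw [h1, hftc i hi]
    calc |f (t (i + 1)) - f (t i) - ∫ x in t i..t (i + 1), (f' x - g x)|
        ≤ |f (t (i + 1)) - f (t i)| + |∫ x in t i..t (i + 1), (f' x - g x)| := abs_sub _ _
      _ ≤ _ := by
          gcongr
          calc |∫ x in t i..t (i + 1), (f' x - g x)| ≤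
              ∫ x in t i..t (i + 1), |f' x - g x| :=
                intervalIntegral.abs_integral_le_integral_abs (htle i)
            _ ≤ _ := le_refl _
  -- sums of adjacent intervals
  have hsum_g : (∑ i ∈ Finset.range m, ∫ x in t i..t (i + 1), |g x|) =
      ∫ x in a..b, |g x| := by
    rw [intervalIntegral.sum_integral_adjacent_intervals
      (fun k _hk => (hgcont.abs.intervalIntegrable _ _)), ht0, htm]
  have hsum_fg : (∑ i ∈ Finset.range m, ∫ x in t i..t (i + 1), |f' x - g x|) =
      ∫ x in a..b, |f' x - g x| := by
    rw [intervalIntegral.sum_integral_adjacent_intervals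
      (fun k hk => hfg_int.mono_set (hsubset k hk)), ht0, htm]
  -- global comparison
  have hglob : (∫ x in a..b, |f' x|) ≤ (∫ x in a..b, |g x|) + ∫ x in a..b, |f' x - g x| := by
    rw [← intervalIntegral.integral_add hgii.abs hfg_int]
    apply intervalIntegral.integral_mono_on hab' hint.abs (hgii.abs.add hfg_int)
    intro x _hx
    calc |f' x| = |g x + (f' x - g x)| := by ring_nf
      _ ≤ |g x| + |f' x - g x| := abs_add_le _ _
  refine ⟨m, hm0, ?_⟩
  have hS : (∫ x in a..b, |g x|) ≤
      (∑ i ∈ Finset.range m, |f (t (i + 1)) - f (t i)|) + (δ / 4) + (δ / 2) := by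
    rw [← hsum_g]
    calc (∑ i ∈ Finset.range m, ∫ x in t i..t (i + 1), |g x|)
        ≤ ∑ i ∈ Finset.range m,
            (|f (t (i + 1)) - f (t i)| + (∫ x in t i..t (i + 1), |f' x - g x|) + 2 * β * w) := by
          apply Finset.sum_le_sum
          intro i hi
          have hi' := Finset.mem_range.1 hi
          linarith [hpc1 i hi', hpc2 i hi']
      _ = (∑ i ∈ Finset.range m, |f (t (i + 1)) - f (t i)|) +
            (∑ i ∈ Finset.range m, ∫ x in t i..t (i + 1), |f' x - g x|) +
            m * (2 * β * w) := by
          rw [Finset.sum_add_distrib, Finset.sum_add_distrib, Finset.sum_const,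
            Finset.card_range, nsmul_eq_mul]
      _ ≤ (∑ i ∈ Finset.range m, |f (t (i + 1)) - f (t i)|) + (δ / 4) + (δ / 2) := by
          rw [hsum_fg]
          have hmw : (m : ℝ) * w = b - a := by rw [hw_def]; field_simp
          have : (m : ℝ) * (2 * β * w) = δ / 2 := by
            have : (m : ℝ) * (2 * β * w) = 2 * β * ((m : ℝ) * w) := by ring
            rw [this, hmw, hβ_def]; field_simp; ring
          linarith [key1]
  have goal : (∫ x in a..b, |f' x|) - δ ≤ ∑ i ∈ Finset.range m, |f (t (i + 1)) - f (t i)| := by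
    linarith [hglob, hS, key1]
  have hrw : ∀ i : ℕ, a + ((i : ℝ) + 1) * ((b - a) / m) = t (i + 1) := by
    intro i; simp only [ht_def]; push_cast; ring
  have hrw2 : ∀ i : ℕ, a + (i : ℝ) * ((b - a) / m) = t i := fun i => rfl
  simp only [hrw, hrw2]
  exact goal

/-- Number of local extremum points of `g` in the open interval `(a, b)`. -/
noncomputable def Zcount (a b : ℝ) (g : ℝ → ℝ) : ℕ :=
  {x | x ∈ Set.Ioo a b ∧ IsLocalExtr g x}.ncard

/-- Model complexity of a function `g` with derivative `d` on `[a, b]`. -/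
noncomputable def MC (a b : ℝ) (g d : ℝ → ℝ) : ℝ :=
  (Zcount a b g : ℝ) * ∫ x in a..b, |d x|

set_option maxHeartbeats 2000000 in
theorem stmt_5 (a b C : ℝ) (N : ℕ) (hab : a ≤ b) (f f' : ℝ → ℝ)
    (hf : ∀ x ∈ Set.Icc a b, HasDerivAt f (f' x) x)
    (hf'int : IntervalIntegrable f' volume a b)
    (happrox : ∀ ε > (0 : ℝ), ∃ F F' : ℝ → ℝ,
      (∀ x ∈ Set.Icc a b, HasDerivAt F (F' x) x) ∧
      IntervalIntegrable F' volume a b ∧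
      (∫ x in a..b, (F x - f x) ^ 2) < ε ^ 2 ∧
      (∫ x in a..b, (F' x - f' x) ^ 2) < ε ^ 2 ∧
      Zcount a b f = Zcount a b F ∧
      Zcount a b F ≤ N ∧
      MC a b F F' ≤ C) :
    MC a b f f' ≤ C := by
  classical
  obtain ⟨F₀, F₀', hF₀, hF₀int, h₀a, h₀b, hZ₀, hZN₀, hMC₀⟩ := happrox 1 one_pos
  simp only [MC] at hMC₀ ⊢
  have hC : 0 ≤ C := by
    refine le_trans ?_ hMC₀
    exact mul_nonneg (Nat.cast_nonneg _)
      (intervalIntegral.integral_nonneg hab fun x _ => abs_nonneg _)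
  rcases eq_or_lt_of_le hab with rfl | hab'
  · rw [intervalIntegral.integral_same, mul_zero]; exact hC
  set Z := Zcount a b f with hZ_def
  rcases Nat.eq_zero_or_pos Z with hZ0 | hZpos
  · rw [hZ0]; simpa using hC
  have hZN : Z ≤ N := hZ₀ ▸ hZN₀
  have hN1 : 1 ≤ N := le_trans hZpos hZN
  have hNpos : (0 : ℝ) < N := by exact_mod_cast hN1
  set I : ℝ := ∫ x in a..b, |f' x| with hI_def
  -- continuity of f
  have hfc : ContinuousOn f (Set.Icc a b) := fun x hx =>
    (hf x hx).continuousAt.continuousWithinAt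
  by_contra hcontra
  push_neg at hcontra
  set δ : ℝ := ((Z : ℝ) * I - C) / 2 with hδ_def
  have hδ : 0 < δ := by rw [hδ_def]; linarith
  suffices hfin : (Z : ℝ) * I ≤ C + δ by
    rw [hδ_def] at hfin; linarith
  set δ' : ℝ := δ / (2 * N) with hδ'_def
  have hδ' : 0 < δ' := by rw [hδ'_def]; positivity
  obtain ⟨m, hm0, hpart⟩ := lemA a b hab' f f' hf hf'int hδ'
  have hmpos : (0 : ℝ) < m := by exact_mod_cast hm0
  set w : ℝ := (b - a) / m with hw_def
  have hw : 0 < w := div_pos (by linarith) hmpos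
  set t : ℕ → ℝ := fun i => a + i * w with ht_def
  have ht0 : t 0 = a := by simp [ht_def]
  have htm : t m = b := by rw [ht_def]; simp only; rw [hw_def]; field_simp; ring
  have hstep : ∀ i, t (i + 1) = t i + w := by
    intro i; simp only [ht_def]; push_cast; ring
  have htmem : ∀ i ≤ m, t i ∈ Set.Icc a b := by
    intro i hi
    constructor
    · simp only [ht_def]; nlinarith [Nat.cast_nonneg (α := ℝ) i, hw.le]
    · rw [← htm]; simp only [ht_def]
      have : (i : ℝ) ≤ m := by exact_mod_cast hi
      nlinarith
  -- uniform continuity of f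
  set ρ : ℝ := δ' / (4 * m) with hρ_def
  have hρ : 0 < ρ := by rw [hρ_def]; positivity
  obtain ⟨η, hη, Hf⟩ : ∃ η > 0, ∀ x ∈ Set.Icc a b, ∀ y ∈ Set.Icc a b,
      dist x y < η → dist (f x) (f y) < ρ := by
    have := (isCompact_Icc (a := a) (b := b)).uniformContinuousOn_of_continuous hfc
    rw [Metric.uniformContinuousOn_iff] at this
    obtain ⟨η, hη, H⟩ := this ρ hρ
    exact ⟨η, hη, H⟩
  set lam : ℝ := min (η / 2) (w / 2) with hlam_def
  have hlam : 0 < lam := lt_min (by linarith) (by linarith)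
  have hlamw : lam ≤ w / 2 := min_le_right _ _
  have hlamη : lam < η := lt_of_le_of_lt (min_le_left _ _) (by linarith)
  set ε : ℝ := ρ * Real.sqrt lam with hε_def
  have hε : 0 < ε := mul_pos hρ (Real.sqrt_pos.2 hlam)
  have hε2 : ε ^ 2 / lam = ρ ^ 2 := by
    rw [hε_def, mul_pow, Real.sq_sqrt hlam.le, mul_div_assoc,
      div_self hlam.ne', mul_one]
  obtain ⟨F, F', hF, hF'int, hFf, -, hZeq, hZNF, hMCF⟩ := happrox ε hε
  have hFc : ContinuousOn F (Set.Icc a b) := fun x hx =>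
    (hF x hx).continuousAt.continuousWithinAt
  -- choice of sample points
  set c : ℕ → ℝ := fun i => if i < m then t i else b - lam with hc_def
  have hcmem : ∀ i, a ≤ c i ∧ c i + lam ≤ b := by
    intro i
    simp only [hc_def]
    split_ifs with h
    · constructor
      · exact (htmem i h.le).1
      · -- t i ≤ b - w for i < m
        have hi1 : (i : ℝ) + 1 ≤ m := by exact_mod_cast h
        have h2 : ((i : ℝ) + 1) * w ≤ (m : ℝ) * w :=
          mul_le_mul_of_nonneg_right hi1 hw.le
        have h3 : a + (m : ℝ) * w = b := htm
        have h2' : (i : ℝ) * w + w ≤ (m : ℝ) * w := by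
          have hr : ((i : ℝ) + 1) * w = (i : ℝ) * w + w := by ring
          linarith
        have : t i + w ≤ b := by
          simp only [ht_def]
          linarith
        linarith
    · constructor
      · have : 2 * lam ≤ w := by linarith
        have hm1' : (1 : ℝ) ≤ m := by exact_mod_cast hm0
        have hwb : w ≤ b - a := by
          rw [hw_def]
          exact div_le_self (by linarith) hm1'
        linarith
      · linarith
  have hpt : ∀ i : ℕ, ∃ s, s ∈ Set.Icc (c i) (c i + lam) ∧ (F s - f s) ^ 2 ≤ ρ ^ 2 := by
    intro i
    obtain ⟨s, hs, hsle⟩ := lemB a b (c i) (c i + lam) (hcmem i).1 (by linarith)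
      (hcmem i).2 (fun x => (F x - f x) ^ 2)
      (((hFc.sub hfc).pow 2)) (fun x => sq_nonneg _) hFf
    refine ⟨s, hs, ?_⟩
    have : c i + lam - c i = lam := by ring
    rwa [this, hε2] at hsle
  choose s hs1 hs2 using hpt
  have hsab : ∀ i, s i ∈ Set.Icc a b := by
    intro i
    exact ⟨(hcmem i).1.trans (hs1 i).1, (hs1 i).2.trans (hcmem i).2⟩
  -- |F (s i) - f (s i)| ≤ ρ
  have hFs : ∀ i, |F (s i) - f (s i)| ≤ ρ := by
    intro i
    have := Real.sqrt_le_sqrt (hs2 i)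
    rwa [Real.sqrt_sq_eq_abs, Real.sqrt_sq hρ.le] at this
  -- |f (t i) - f (s i)| ≤ ρ for i ≤ m
  have hfs : ∀ i ≤ m, |f (t i) - f (s i)| ≤ ρ := by
    intro i hi
    have hdist : dist (t i) (s i) < η := by
      rw [Real.dist_eq]
      rcases lt_or_ge i m with h | h
      · have hci : c i = t i := by simp only [hc_def]; rw [if_pos h]
        have h1 := (hs1 i).1; have h2 := (hs1 i).2
        rw [hci] at h1 h2
        rw [abs_lt]; constructor <;> linarith
      · have him : i = m := le_antisymm hi h
        have hci : c i = b - lam := by simp only [hc_def]; rw [if_neg (Nat.not_lt.2 h)]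
        have h1 := (hs1 i).1; have h2 := (hs1 i).2
        rw [hci] at h1 h2
        have : t i = b := by rw [him, htm]
        rw [this, abs_lt]; constructor <;> linarith
    exact (Hf (t i) (htmem i hi) (s i) (hsab i) hdist).le
  -- monotonicity of sample points
  have hmono : ∀ i < m, s i ≤ s (i + 1) := by
    intro i hi
    have h1 : s i ≤ c i + lam := (hs1 i).2
    have h2 : c (i + 1) ≤ s (i + 1) := (hs1 (i + 1)).1
    have key : c i + lam ≤ c (i + 1) := by
      simp only [hc_def]
      rw [if_pos hi]
      split_ifs with h
      · rw [hstep]; linarith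
      · -- i + 1 = m, c (i+1) = b - lam; t i ≤ b - w
        have hi1 : i + 1 = m := le_antisymm hi (Nat.not_lt.1 h)
        have : t i + w ≤ b := by
          rw [← htm, ← hi1, hstep]
        linarith
    linarith
  have hs0 : a ≤ s 0 := (hcmem 0).1.trans (hs1 0).1
  have hsm : s m ≤ b := (hs1 m).2.trans (hcmem m).2
  -- FTC on sample intervals
  have hsub : ∀ i < m, Set.uIcc (s i) (s (i + 1)) ⊆ Set.uIcc a b := by
    intro i hi
    rw [Set.uIcc_of_le hab, Set.uIcc_of_le (hmono i hi)]
    exact Set.Icc_subset_Icc (hsab i).1 (hsab (i + 1)).2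
  have hFTC : ∀ i < m, F (s (i + 1)) - F (s i) = ∫ x in s i..s (i + 1), F' x := by
    intro i hi
    refine (intervalIntegral.integral_eq_sub_of_hasDerivAt ?_ (hF'int.mono_set (hsub i hi))).symm
    intro x hx
    exact hF x (by rw [← Set.uIcc_of_le hab]; exact hsub i hi hx)
  -- per-index estimate
  have hidx : ∀ i < m, |f (t (i + 1)) - f (t i)| ≤
      |F (s (i + 1)) - F (s i)| + 4 * ρ := by
    intro i hi
    have e1 : |f (t (i + 1)) - f (s (i + 1))| ≤ ρ := hfs (i + 1) hi
    have e2 : |f (t i) - f (s i)| ≤ ρ := hfs i hi.le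
    have e3 : |F (s (i + 1)) - f (s (i + 1))| ≤ ρ := hFs (i + 1)
    have e4 : |F (s i) - f (s i)| ≤ ρ := hFs i
    have h5 : |f (t (i + 1)) - f (t i) - (F (s (i + 1)) - F (s i))| ≤ 4 * ρ := by
      have hdecomp : f (t (i + 1)) - f (t i) - (F (s (i + 1)) - F (s i)) =
          (f (t (i + 1)) - f (s (i + 1))) - (f (t i) - f (s i)) -
          (F (s (i + 1)) - f (s (i + 1))) + (F (s i) - f (s i)) := by ring
      rw [hdecomp]
      have t1 := abs_add_le ((f (t (i + 1)) - f (s (i + 1))) - (f (t i) - f (s i)) -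
        (F (s (i + 1)) - f (s (i + 1)))) (F (s i) - f (s i))
      have t2 := abs_sub ((f (t (i + 1)) - f (s (i + 1))) - (f (t i) - f (s i)))
        (F (s (i + 1)) - f (s (i + 1)))
      have t3 := abs_sub (f (t (i + 1)) - f (s (i + 1))) (f (t i) - f (s i))
      linarith
    have h6 := abs_add_le (F (s (i + 1)) - F (s i))
      (f (t (i + 1)) - f (t i) - (F (s (i + 1)) - F (s i)))
    have h7 : F (s (i + 1)) - F (s i) +
        (f (t (i + 1)) - f (t i) - (F (s (i + 1)) - F (s i))) =
        f (t (i + 1)) - f (t i) := by ring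
    rw [h7] at h6
    linarith
  -- sum estimate
  set J : ℝ := ∫ x in a..b, |F' x| with hJ_def
  have hsumF : (∑ i ∈ Finset.range m, |F (s (i + 1)) - F (s i)|) ≤ J := by
    have hstep1 : ∀ i ∈ Finset.range m,
        |F (s (i + 1)) - F (s i)| ≤ ∫ x in s i..s (i + 1), |F' x| := by
      intro i hi
      have hi' := Finset.mem_range.1 hi
      rw [hFTC i hi']
      exact intervalIntegral.abs_integral_le_integral_abs (hmono i hi')
    calc (∑ i ∈ Finset.range m, |F (s (i + 1)) - F (s i)|)
        ≤ ∑ i ∈ Finset.range m, ∫ x in s i..s (i + 1), |F' x| :=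
          Finset.sum_le_sum hstep1
      _ = ∫ x in (s 0)..(s m), |F' x| := by
          apply intervalIntegral.sum_integral_adjacent_intervals
          intro k hk
          exact hF'int.abs.mono_set (hsub k hk)
      _ ≤ J := by
          rw [hJ_def]
          apply intervalIntegral.integral_mono_interval hs0
            (by
              have hchain : ∀ j ≤ m, s 0 ≤ s j := by
                intro j hjm
                induction j with
                | zero => exact le_rfl
                | succ n ih =>
                  exact le_trans (ih (by omega)) (hmono n (by omega))
              exact hchain m le_rfl) hsm
            (Filter.Eventually.of_forall fun x => abs_nonneg _) hF'int.abs
  -- putting it together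
  have hsum : I - δ' ≤ J + 4 * ρ * m := by
    have h1 : (∑ i ∈ Finset.range m,
        |f (a + ((i : ℝ) + 1) * w) - f (a + (i : ℝ) * w)|) =
        ∑ i ∈ Finset.range m, |f (t (i + 1)) - f (t i)| := by
      apply Finset.sum_congr rfl
      intro i _
      have e1 : t (i + 1) = a + ((i : ℝ) + 1) * w := by
        simp only [ht_def]; push_cast; ring
      have e2 : t i = a + (i : ℝ) * w := rfl
      rw [e1, e2]
    rw [h1] at hpart
    have h2 : (∑ i ∈ Finset.range m, |f (t (i + 1)) - f (t i)|) ≤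
        (∑ i ∈ Finset.range m, |F (s (i + 1)) - F (s i)|) + m * (4 * ρ) := by
      calc (∑ i ∈ Finset.range m, |f (t (i + 1)) - f (t i)|)
          ≤ ∑ i ∈ Finset.range m, (|F (s (i + 1)) - F (s i)| + 4 * ρ) := by
            apply Finset.sum_le_sum
            intro i hi
            exact hidx i (Finset.mem_range.1 hi)
        _ = (∑ i ∈ Finset.range m, |F (s (i + 1)) - F (s i)|) + m * (4 * ρ) := by
            rw [Finset.sum_add_distrib, Finset.sum_const, Finset.card_range, nsmul_eq_mul]
    linarith [hsumF]
  have hρm : 4 * ρ * m = δ' := by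
    have h4m : (4 : ℝ) * m ≠ 0 := by positivity
    rw [hρ_def]
    calc 4 * (δ' / (4 * (m : ℝ))) * m = δ' / (4 * m) * (4 * m) := by ring
      _ = δ' := div_mul_cancel₀ _ h4m
  have hIJ : I ≤ J + 2 * δ' := by rw [← hρm]; linarith
  -- final arithmetic
  simp only [MC] at hMCF
  rw [← hZeq] at hMCF hZNF
  have hZNr : (Z : ℝ) ≤ N := by exact_mod_cast hZNF
  have hfinal : (Z : ℝ) * I ≤ C + 2 * (N : ℝ) * δ' := by
    have h1 : (Z : ℝ) * I ≤ (Z : ℝ) * (J + 2 * δ') :=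
      mul_le_mul_of_nonneg_left hIJ (Nat.cast_nonneg _)
    have h2 : (Z : ℝ) * (J + 2 * δ') = (Z : ℝ) * J + (Z : ℝ) * (2 * δ') := by ring
    have h3 : (Z : ℝ) * (2 * δ') ≤ (N : ℝ) * (2 * δ') :=
      mul_le_mul_of_nonneg_right hZNr (by positivity)
    linarith [hMCF]
  have : 2 * (N : ℝ) * δ' = δ := by
    have h2N : (2 : ℝ) * N ≠ 0 := by positivity
    rw [hδ'_def]
    calc 2 * (N : ℝ) * (δ / (2 * N)) = δ / (2 * N) * (2 * N) := by ring
      _ = δ := div_mul_cancel₀ _ h2N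
  linarith
end

section
/- Let H be a real Hilbert space, e ∈ H nonzero, φ ∈ H with 0 < ‖φ‖ ≤ b_φ, and suppose ⟨e, φ⟩² ≥ b_φ² δ where δ = (1 - r - μ)‖e‖² for some 0 < r < 1 and 0 ≤ μ ≤ 1 - r. Then with β* = ⟨e, φ⟩ / ‖φ‖², the new residual e' = e - β* φ satisfies ‖e'‖² ≤ (r + μ)‖e‖². -/
theorem stmt_7 {H : Type*} [NormedAddCommGroup H] [InnerProductSpace ℝ H]
    (e φ : H) (bφ r μ δ : ℝ) (he : e ≠ 0) (hφ0 : 0 < ‖φ‖) (hφb : ‖φ‖ ≤ bφ)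
    (hr0 : 0 < r) (hr1 : r < 1) (hμ0 : 0 ≤ μ) (hμ : μ ≤ 1 - r)
    (hδ : δ = (1 - r - μ) * ‖e‖ ^ 2)
    (hineq : bφ ^ 2 * δ ≤ (inner ℝ e φ : ℝ) ^ 2) :
    ‖e - ((inner ℝ e φ : ℝ) / ‖φ‖ ^ 2) • φ‖ ^ 2 ≤ (r + μ) * ‖e‖ ^ 2 := by
  set c : ℝ := (inner ℝ e φ : ℝ) with hc
  have hφ2 : ‖φ‖ ^ 2 ≠ 0 := by positivity
  have hexp : ‖e - (c / ‖φ‖ ^ 2) • φ‖ ^ 2 = ‖e‖ ^ 2 - c ^ 2 / ‖φ‖ ^ 2 := by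
    rw [norm_sub_sq_real, inner_smul_right, norm_smul]
    rw [Real.norm_eq_abs, mul_pow, sq_abs, div_pow, ← hc]
    field_simp
    ring
  rw [hexp]
  have hb : 0 < bφ := lt_of_lt_of_le hφ0 hφb
  have h1 : δ ≤ c ^ 2 / ‖φ‖ ^ 2 := by
    rw [le_div_iff₀ (by positivity)]
    calc δ * ‖φ‖ ^ 2 ≤ δ * bφ ^ 2 := by
          apply mul_le_mul_of_nonneg_left (by nlinarith) 
          rw [hδ]; have : 0 ≤ (1 - r - μ) := by linarith
          positivity
      _ = bφ ^ 2 * δ := by ring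
      _ ≤ c ^ 2 := hineq
  nlinarith [sq_nonneg ‖e‖]
end
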